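/- Let u be a C² solution of u_{tt} − u_{xx} + u + (u³)_{xx} = 0 with ‖u‖_{L^∞} < 1/√3, and define u₁ = u_t, u₂ = (1−3u²)^{1/2} u_x, u₃ = u. Then (u₁,u₂,u₃) solves the symmetric first-order quasilinear system ∂_t u₁ − (1−3u₃²)^{1/2} ∂_x u₂ = −u₃ − 3u₂²u₃/(1−3u₃²), ∂_t u₂ − (1−3u₃²)^{1/2} ∂_x u₁ = −3u₁u₂u₃/(1−3u₃²), ∂_t u₃ = u₁. -/

import Mathlib

open Set

lemma slice_deriv_t {E : Type*} [NormedAddCommGroup E] [NormedSpace ℝ E]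
    (g : ℝ × ℝ → E) (hg : Differentiable ℝ g) (t x : ℝ) :
    HasDerivAt (fun s => g (s, x)) (fderiv ℝ g (t, x) (1, 0)) t := by
  have h := (hg (t, x)).hasFDerivAt.comp_hasDerivAt t
    ((hasDerivAt_id t).prodMk (hasDerivAt_const t x))
  simpa [Function.comp_def] using h

lemma slice_deriv_x {E : Type*} [NormedAddCommGroup E] [NormedSpace ℝ E]
    (g : ℝ × ℝ → E) (hg : Differentiable ℝ g) (t x : ℝ) :
    HasDerivAt (fun y => g (t, y)) (fderiv ℝ g (t, x) (0, 1)) x := by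
  have h := (hg (t, x)).hasFDerivAt.comp_hasDerivAt x
    ((hasDerivAt_const x t).prodMk (hasDerivAt_id x))
  simpa [Function.comp_def] using h

/-- A `C²` solution of the quasilinear Klein–Gordon equation
`u_{tt} − u_{xx} + u + (u³)_{xx} = 0` with `‖u‖_{L^∞} < 1/√3` gives, via
`u₁ = u_t`, `u₂ = (1−3u²)^{1/2} u_x`, `u₃ = u`, a solution of the symmetric
first-order quasilinear system
`∂_t u₁ − (1−3u₃²)^{1/2} ∂_x u₂ = −u₃ − 3u₂²u₃/(1−3u₃²)`,
`∂_t u₂ − (1−3u₃²)^{1/2} ∂_x u₁ = −3u₁u₂u₃/(1−3u₃²)`,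
`∂_t u₃ = u₁`. -/
theorem quasilinear_symmetric_system
    (u : ℝ → ℝ → ℝ) (hu : ContDiff ℝ 2 (Function.uncurry u))
    (hbound : ∀ t x : ℝ, |u t x| < 1 / Real.sqrt 3)
    (hPDE : ∀ t x : ℝ,
      iteratedDeriv 2 (fun s : ℝ => u s x) t
        - iteratedDeriv 2 (fun y : ℝ => u t y) x
        + u t x
        + iteratedDeriv 2 (fun y : ℝ => (u t y) ^ 3) x = 0) :
    ∀ t x : ℝ,
      (deriv (fun s : ℝ => deriv (fun r : ℝ => u r x) s) t
          - Real.sqrt (1 - 3 * (u t x) ^ 2)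
            * deriv (fun y : ℝ =>
                Real.sqrt (1 - 3 * (u t y) ^ 2) * deriv (fun z : ℝ => u t z) y) x
        = -(u t x)
          - 3 * (Real.sqrt (1 - 3 * (u t x) ^ 2) * deriv (fun z : ℝ => u t z) x) ^ 2
            * u t x / (1 - 3 * (u t x) ^ 2)) ∧
      (deriv (fun s : ℝ =>
            Real.sqrt (1 - 3 * (u s x) ^ 2) * deriv (fun z : ℝ => u s z) x) t
          - Real.sqrt (1 - 3 * (u t x) ^ 2)
            * deriv (fun y : ℝ => deriv (fun s : ℝ => u s y) t) x
        = -3 * deriv (fun s : ℝ => u s x) t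
            * (Real.sqrt (1 - 3 * (u t x) ^ 2) * deriv (fun z : ℝ => u t z) x)
            * u t x / (1 - 3 * (u t x) ^ 2)) ∧
      (deriv (fun s : ℝ => u s x) t = deriv (fun s : ℝ => u s x) t) := by
  have hfd : Differentiable ℝ (Function.uncurry u) :=
    hu.differentiable (by norm_num)
  have hFc : ContDiff ℝ 1 (fderiv ℝ (Function.uncurry u)) :=
    hu.fderiv_right (by norm_num)
  have hFd : Differentiable ℝ (fderiv ℝ (Function.uncurry u)) :=
    hFc.differentiable one_ne_zero
  -- first partial derivatives
  have hut : ∀ s y : ℝ, HasDerivAt (fun r => u r y)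
      (fderiv ℝ (Function.uncurry u) (s, y) (1, 0)) s := by
    intro s y
    exact slice_deriv_t (Function.uncurry u) hfd s y
  have hux : ∀ s y : ℝ, HasDerivAt (fun z => u s z)
      (fderiv ℝ (Function.uncurry u) (s, y) (0, 1)) y := by
    intro s y
    exact slice_deriv_x (Function.uncurry u) hfd s y
  -- second partial derivatives
  have hpt : ∀ v : ℝ × ℝ, ∀ s y : ℝ,
      HasDerivAt (fun r => fderiv ℝ (Function.uncurry u) (r, y) v)
        (fderiv ℝ (fderiv ℝ (Function.uncurry u)) (s, y) (1, 0) v) s := by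
    intro v s y
    have h1 := slice_deriv_t (fderiv ℝ (Function.uncurry u)) hFd s y
    have h2 := (ContinuousLinearMap.apply ℝ ℝ v).hasFDerivAt.comp_hasDerivAt s h1
    simpa [Function.comp_def] using h2
  have hpx : ∀ v : ℝ × ℝ, ∀ s y : ℝ,
      HasDerivAt (fun z => fderiv ℝ (Function.uncurry u) (s, z) v)
        (fderiv ℝ (fderiv ℝ (Function.uncurry u)) (s, y) (0, 1) v) y := by
    intro v s y
    have h1 := slice_deriv_x (fderiv ℝ (Function.uncurry u)) hFd s y
    have h2 := (ContinuousLinearMap.apply ℝ ℝ v).hasFDerivAt.comp_hasDerivAt y h1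
    simpa [Function.comp_def] using h2
  have hsymm : ∀ s y : ℝ,
      fderiv ℝ (fderiv ℝ (Function.uncurry u)) (s, y) (1, 0) (0, 1)
        = fderiv ℝ (fderiv ℝ (Function.uncurry u)) (s, y) (0, 1) (1, 0) := by
    intro s y
    exact second_derivative_symmetric (fun p => (hfd p).hasFDerivAt)
      ((hFd (s, y)).hasFDerivAt) _ _
  -- positivity
  have hcpos : ∀ s y : ℝ, 0 < 1 - 3 * (u s y) ^ 2 := by
    intro s y
    have h := hbound s y
    have h3 : (0 : ℝ) < Real.sqrt 3 := Real.sqrt_pos.mpr (by norm_num)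
    have h3' : Real.sqrt 3 * Real.sqrt 3 = 3 := Real.mul_self_sqrt (by norm_num)
    have habs : |u s y| * Real.sqrt 3 < 1 := by
      rw [lt_div_iff₀ h3] at h; exact h
    nlinarith [abs_nonneg (u s y), sq_abs (u s y), h3.le]
  have hwpos : ∀ s y : ℝ, 0 < Real.sqrt (1 - 3 * (u s y) ^ 2) :=
    fun s y => Real.sqrt_pos.mpr (hcpos s y)
  have hw2 : ∀ s y : ℝ, Real.sqrt (1 - 3 * (u s y) ^ 2) ^ 2 = 1 - 3 * (u s y) ^ 2 :=
    fun s y => Real.sq_sqrt (hcpos s y).le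
  -- derivatives of the weight
  have hWx : ∀ s y : ℝ, HasDerivAt (fun z => Real.sqrt (1 - 3 * (u s z) ^ 2))
      (-3 * u s y * fderiv ℝ (Function.uncurry u) (s, y) (0, 1)
        / Real.sqrt (1 - 3 * (u s y) ^ 2)) y := by
    intro s y
    have hi : HasDerivAt (fun z => 1 - 3 * (u s z) ^ 2)
        (0 - 3 * ((2 : ℕ) * u s y ^ 1 * fderiv ℝ (Function.uncurry u) (s, y) (0, 1))) y :=
      (hasDerivAt_const y (1 : ℝ)).sub (((hux s y).pow 2).const_mul 3)
    have hs := (Real.hasDerivAt_sqrt (hcpos s y).ne').comp y hi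
    refine hs.congr_deriv ?_
    have := (hwpos s y).ne'
    field_simp
    ring
  have hWt : ∀ s y : ℝ, HasDerivAt (fun r => Real.sqrt (1 - 3 * (u r y) ^ 2))
      (-3 * u s y * fderiv ℝ (Function.uncurry u) (s, y) (1, 0)
        / Real.sqrt (1 - 3 * (u s y) ^ 2)) s := by
    intro s y
    have hi : HasDerivAt (fun r => 1 - 3 * (u r y) ^ 2)
        (0 - 3 * ((2 : ℕ) * u s y ^ 1 * fderiv ℝ (Function.uncurry u) (s, y) (1, 0))) s :=
      (hasDerivAt_const s (1 : ℝ)).sub (((hut s y).pow 2).const_mul 3)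
    have hs := (Real.hasDerivAt_sqrt (hcpos s y).ne').comp s hi
    refine hs.congr_deriv ?_
    have := (hwpos s y).ne'
    field_simp
    ring
  -- the PDE in terms of partial derivatives
  have hPDE' : ∀ s y : ℝ,
      fderiv ℝ (fderiv ℝ (Function.uncurry u)) (s, y) (1, 0) (1, 0)
        - fderiv ℝ (fderiv ℝ (Function.uncurry u)) (s, y) (0, 1) (0, 1)
        + u s y
        + (6 * u s y * (fderiv ℝ (Function.uncurry u) (s, y) (0, 1)) ^ 2
            + 3 * (u s y) ^ 2
              * fderiv ℝ (fderiv ℝ (Function.uncurry u)) (s, y) (0, 1) (0, 1)) = 0 := by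
    intro s y
    have h := hPDE s y
    have e1 : iteratedDeriv 2 (fun r : ℝ => u r y) s
        = fderiv ℝ (fderiv ℝ (Function.uncurry u)) (s, y) (1, 0) (1, 0) := by
      rw [show (2 : ℕ) = 1 + 1 from rfl, iteratedDeriv_succ, iteratedDeriv_one]
      have hd : deriv (fun r : ℝ => u r y)
          = fun r => fderiv ℝ (Function.uncurry u) (r, y) (1, 0) :=
        funext fun r => (hut r y).deriv
      rw [hd]
      exact (hpt (1, 0) s y).deriv
    have e2 : iteratedDeriv 2 (fun z : ℝ => u s z) y
        = fderiv ℝ (fderiv ℝ (Function.uncurry u)) (s, y) (0, 1) (0, 1) := by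
      rw [show (2 : ℕ) = 1 + 1 from rfl, iteratedDeriv_succ, iteratedDeriv_one]
      have hd : deriv (fun z : ℝ => u s z)
          = fun z => fderiv ℝ (Function.uncurry u) (s, z) (0, 1) :=
        funext fun z => (hux s z).deriv
      rw [hd]
      exact (hpx (0, 1) s y).deriv
    have e3 : iteratedDeriv 2 (fun z : ℝ => (u s z) ^ 3) y
        = 6 * u s y * (fderiv ℝ (Function.uncurry u) (s, y) (0, 1)) ^ 2
          + 3 * (u s y) ^ 2
            * fderiv ℝ (fderiv ℝ (Function.uncurry u)) (s, y) (0, 1) (0, 1) := by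
      rw [show iteratedDeriv 2 (fun z : ℝ => (u s z) ^ 3) = iteratedDeriv (1 + 1) (fun z : ℝ => (u s z) ^ 3) from rfl, iteratedDeriv_succ, iteratedDeriv_one]
      have hd : deriv (fun z : ℝ => (u s z) ^ 3)
          = fun z => 3 * (u s z) ^ 2 * fderiv ℝ (Function.uncurry u) (s, z) (0, 1) := by
        funext z
        have := ((hux s z).pow 3).deriv
        rw [show (fun z : ℝ => (u s z) ^ 3) = (fun z : ℝ => u s z) ^ 3 from rfl, this]
        push_cast
        ring
      rw [hd]
      have hmul : HasDerivAt
          (fun z => 3 * (u s z) ^ 2 * fderiv ℝ (Function.uncurry u) (s, z) (0, 1))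
          (6 * u s y * (fderiv ℝ (Function.uncurry u) (s, y) (0, 1)) ^ 2
            + 3 * (u s y) ^ 2
              * fderiv ℝ (fderiv ℝ (Function.uncurry u)) (s, y) (0, 1) (0, 1)) y := by
        have h1 := ((hux s y).pow 2).const_mul (3 : ℝ)
        have h2 := hpx (0, 1) s y
        have h3 := h1.mul h2
        refine h3.congr_deriv ?_
        push_cast [Pi.pow_apply]
        ring
      exact hmul.deriv
    rw [e1, e2, e3] at h
    linarith
  intro t x
  refine ⟨?_, ?_, rfl⟩
  · -- first equation
    have hb1 : deriv (fun s : ℝ => deriv (fun r : ℝ => u r x) s) t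
        = fderiv ℝ (fderiv ℝ (Function.uncurry u)) (t, x) (1, 0) (1, 0) := by
      have hd : (fun s : ℝ => deriv (fun r : ℝ => u r x) s)
          = fun s => fderiv ℝ (Function.uncurry u) (s, x) (1, 0) :=
        funext fun s => (hut s x).deriv
      rw [hd]
      exact (hpt (1, 0) t x).deriv
    have hb2 : deriv (fun y : ℝ =>
          Real.sqrt (1 - 3 * (u t y) ^ 2) * deriv (fun z : ℝ => u t z) y) x
        = (-3 * u t x * fderiv ℝ (Function.uncurry u) (t, x) (0, 1)
              / Real.sqrt (1 - 3 * (u t x) ^ 2))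
            * fderiv ℝ (Function.uncurry u) (t, x) (0, 1)
          + Real.sqrt (1 - 3 * (u t x) ^ 2)
            * fderiv ℝ (fderiv ℝ (Function.uncurry u)) (t, x) (0, 1) (0, 1) := by
      have hd : (fun y : ℝ =>
            Real.sqrt (1 - 3 * (u t y) ^ 2) * deriv (fun z : ℝ => u t z) y)
          = fun y => Real.sqrt (1 - 3 * (u t y) ^ 2)
              * fderiv ℝ (Function.uncurry u) (t, y) (0, 1) :=
        funext fun y => by rw [(hux t y).deriv]
      rw [hd]
      exact ((hWx t x).mul (hpx (0, 1) t x)).deriv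
    rw [hb1, hb2, (hux t x).deriv]
    set a := u t x
    set q := fderiv ℝ (Function.uncurry u) (t, x) (0, 1)
    set w := Real.sqrt (1 - 3 * a ^ 2) with hwdef
    set utt := fderiv ℝ (fderiv ℝ (Function.uncurry u)) (t, x) (1, 0) (1, 0)
    set uxx := fderiv ℝ (fderiv ℝ (Function.uncurry u)) (t, x) (0, 1) (0, 1)
    have hP := hPDE' t x
    have key : utt = (1 - 3 * a ^ 2) * uxx - a - 6 * a * q ^ 2 := by
      linear_combination hP
    have hwne : w ≠ 0 := (hwpos t x).ne'
    have hcne : (1 - 3 * a ^ 2) ≠ 0 := (hcpos t x).ne'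
    have hw2' : w ^ 2 = 1 - 3 * a ^ 2 := hw2 t x
    have hA : w * ((-3 * a * q / w) * q + w * uxx)
        = -3 * a * q ^ 2 + (1 - 3 * a ^ 2) * uxx := by
      rw [← hw2']
      field_simp
    have hB : 3 * (w * q) ^ 2 * a / (1 - 3 * a ^ 2) = 3 * q ^ 2 * a := by
      rw [← hw2']
      field_simp
    rw [key, hA, hB]
    ring
  · -- second equation
    have hb1 : deriv (fun s : ℝ =>
          Real.sqrt (1 - 3 * (u s x) ^ 2) * deriv (fun z : ℝ => u s z) x) t
        = (-3 * u t x * fderiv ℝ (Function.uncurry u) (t, x) (1, 0)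
              / Real.sqrt (1 - 3 * (u t x) ^ 2))
            * fderiv ℝ (Function.uncurry u) (t, x) (0, 1)
          + Real.sqrt (1 - 3 * (u t x) ^ 2)
            * fderiv ℝ (fderiv ℝ (Function.uncurry u)) (t, x) (1, 0) (0, 1) := by
      have hd : (fun s : ℝ =>
            Real.sqrt (1 - 3 * (u s x) ^ 2) * deriv (fun z : ℝ => u s z) x)
          = fun s => Real.sqrt (1 - 3 * (u s x) ^ 2)
              * fderiv ℝ (Function.uncurry u) (s, x) (0, 1) :=
        funext fun s => by rw [(hux s x).deriv]
      rw [hd]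
      exact ((hWt t x).mul (hpt (0, 1) t x)).deriv
    have hb2 : deriv (fun y : ℝ => deriv (fun s : ℝ => u s y) t) x
        = fderiv ℝ (fderiv ℝ (Function.uncurry u)) (t, x) (0, 1) (1, 0) := by
      have hd : (fun y : ℝ => deriv (fun s : ℝ => u s y) t)
          = fun y => fderiv ℝ (Function.uncurry u) (t, y) (1, 0) :=
        funext fun y => (hut t y).deriv
      rw [hd]
      exact (hpx (1, 0) t x).deriv
    rw [hb1, hb2, ← hsymm t x, (hux t x).deriv, (hut t x).deriv]
    set a := u t x
    set p := fderiv ℝ (Function.uncurry u) (t, x) (1, 0)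
    set q := fderiv ℝ (Function.uncurry u) (t, x) (0, 1)
    set w := Real.sqrt (1 - 3 * a ^ 2)
    set m := fderiv ℝ (fderiv ℝ (Function.uncurry u)) (t, x) (1, 0) (0, 1)
    have hwne : w ≠ 0 := (hwpos t x).ne'
    have hw2' : w ^ 2 = 1 - 3 * a ^ 2 := hw2 t x
    rw [← hw2']
    field_simp
    ring
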